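/- arXiv:2304.04243 — 4 statements merged into one kernel-verified Lean document; each statement's English description precedes it below -/
import Mathlib

section
/- Let a ∈ ℝ, let ω : ℝ → ℝ be measurable with ∫_{(−∞,a)} ω(t)² dt < ∞, and let g : ℝ → [0,∞) be measurable with ∫_{(−∞,a)} (a−t)·g(t) dt < ∞. Define ψ(x) := −∫_x^a ω(t) dt for x ≤ a. Then ∫_{(−∞,a)} g(x)·ψ(x)² dx ≤ (∫_{(−∞,a)} ω(t)² dt) · (∫_{(−∞,a)} (a−t)·g(t) dt); in particular ψ is square-integrable on (−∞,a) with respect to the weighted measure g(x) dx. -/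
open MeasureTheory Set Real
open scoped ENNReal

/-- An `L²` function on `(-∞, a)` is integrable on any bounded subinterval. -/
lemma l2_to_l1 (a b : ℝ) {ω : ℝ → ℝ} (hm : Measurable ω)
    (hsq : IntegrableOn (fun t => ω t ^ 2) (Iio a)) : IntegrableOn ω (Ioo b a) := by
  haveI : IsFiniteMeasure (volume.restrict (Ioo b a)) :=
    ⟨by rw [Measure.restrict_apply_univ]; exact measure_Ioo_lt_top⟩
  have h2 : MemLp ω 2 (volume.restrict (Ioo b a)) := by
    rw [memLp_two_iff_integrable_sq hm.aestronglyMeasurable]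
    exact hsq.mono_set Ioo_subset_Iio_self
  exact h2.integrable one_le_two

/-- Cauchy–Schwarz on a bounded interval. -/
lemma cs_aux {x a : ℝ} (hx : x ≤ a) {ω : ℝ → ℝ} (hm : Measurable ω)
    (hsq : IntegrableOn (fun t => ω t ^ 2) (Ioo x a)) :
    (∫ t in Ioo x a, ω t) ^ 2 ≤ (a - x) * ∫ t in Ioo x a, ω t ^ 2 := by
  set μ := volume.restrict (Ioo x a) with hμ
  haveI : IsFiniteMeasure μ :=
    ⟨by rw [Measure.restrict_apply_univ]; exact measure_Ioo_lt_top⟩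
  have h2 : (ENNReal.ofReal 2 : ℝ≥0∞) = 2 := by norm_num
  have hf : MemLp (fun t => |ω t|) (ENNReal.ofReal 2) μ := by
    rw [h2, memLp_two_iff_integrable_sq hm.abs.aestronglyMeasurable]
    simp only [sq_abs]; exact hsq
  have hone : MemLp (fun _ : ℝ => (1 : ℝ)) (ENNReal.ofReal 2) μ := memLp_const 1
  have hCS := integral_mul_le_Lp_mul_Lq_of_nonneg (p := 2) (q := 2)
    Real.HolderConjugate.two_two (Filter.Eventually.of_forall fun t => abs_nonneg (ω t))
    (Filter.Eventually.of_forall fun _ => zero_le_one) hf hone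
  simp only [mul_one, one_rpow] at hCS
  have hI2 : (∫ t, |ω t| ^ (2 : ℝ) ∂μ) = ∫ t in Ioo x a, ω t ^ 2 := by
    rw [hμ]
    refine setIntegral_congr_fun measurableSet_Ioo fun t _ => ?_
    rw [Real.rpow_two, sq_abs]
  have hvol : (∫ _ : ℝ, (1 : ℝ) ∂μ) = a - x := by
    simp [hμ, hx, Real.volume_Ioo, ENNReal.toReal_ofReal (by linarith : (0:ℝ) ≤ a - x)]
  rw [hI2, hvol] at hCS
  have hInn : 0 ≤ ∫ t in Ioo x a, ω t ^ 2 :=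
    setIntegral_nonneg measurableSet_Ioo fun t _ => sq_nonneg _
  have habs : |∫ t in Ioo x a, ω t| ≤
      (∫ t in Ioo x a, ω t ^ 2) ^ (1 / (2:ℝ)) * (a - x) ^ (1 / (2:ℝ)) := by
    calc |∫ t in Ioo x a, ω t| ≤ ∫ t in Ioo x a, |ω t| := by
          simpa using norm_integral_le_integral_norm (μ := μ) ω
      _ ≤ _ := hCS
  calc (∫ t in Ioo x a, ω t) ^ 2 = |∫ t in Ioo x a, ω t| ^ 2 := (sq_abs _).symm
    _ ≤ ((∫ t in Ioo x a, ω t ^ 2) ^ (1 / (2:ℝ)) * (a - x) ^ (1 / (2:ℝ))) ^ 2 :=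
        pow_le_pow_left₀ (abs_nonneg _) habs 2
    _ = (a - x) * ∫ t in Ioo x a, ω t ^ 2 := by
        rw [mul_pow, ← Real.rpow_natCast ((∫ t in Ioo x a, ω t ^ 2) ^ (1 / (2:ℝ))) 2,
          ← Real.rpow_natCast ((a - x) ^ (1 / (2:ℝ))) 2,
          ← Real.rpow_mul hInn, ← Real.rpow_mul (by linarith : (0:ℝ) ≤ a - x)]
        norm_num
        ring

/-- The primitive `x ↦ ∫ t in x..a, ω t` is continuous on `(-∞, a)`. -/
lemma psi_contOn (a : ℝ) {ω : ℝ → ℝ} (hm : Measurable ω)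
    (hsq : IntegrableOn (fun t => ω t ^ 2) (Iio a)) :
    ContinuousOn (fun x => ∫ t in x..a, ω t) (Iio a) := by
  intro x hx
  have hxa : x < a := hx
  set b := x - 1 with hb
  have hba : b ≤ a := by linarith
  have hInt : IntervalIntegrable ω volume b a := by
    rw [intervalIntegrable_iff_integrableOn_Ioc_of_le hba,
      integrableOn_Ioc_iff_integrableOn_Ioo]
    exact l2_to_l1 a b hm hsq
  have hc : ContinuousWithinAt (fun y => ∫ t in a..y, ω t) (Icc b a) x := by
    apply intervalIntegral.continuousWithinAt_primitive (measure_singleton x)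
    rwa [min_eq_right hba, max_self]
  have hc2 : ContinuousWithinAt (fun y => ∫ t in y..a, ω t) (Icc b a) x := by
    have : (fun y => ∫ t in y..a, ω t) = fun y => -(∫ t in a..y, ω t) := by
      funext y; rw [intervalIntegral.integral_symm]
    rw [this]
    exact hc.neg
  refine hc2.mono_of_mem_nhdsWithin ?_
  rw [mem_nhdsWithin_iff_exists_mem_nhds_inter]
  exact ⟨Ioi b, Ioi_mem_nhds (by linarith), fun y ⟨hy1, hy2⟩ => ⟨le_of_lt hy1, le_of_lt hy2⟩⟩

/-- the weighted `L²` bound for the canonical primitive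
`ψ x = -∫_x^a ω` of a square-integrable function `ω` on `(-∞, a)`, for a
nonnegative weight `g` with `∫_{(-∞,a)} (a - t) g t dt < ∞`. -/
theorem stmt_1 (a : ℝ) (ω g : ℝ → ℝ) (hω_meas : Measurable ω)
    (hω : IntegrableOn (fun t => ω t ^ 2) (Iio a))
    (hg_meas : Measurable g) (hg_nonneg : ∀ t, 0 ≤ g t)
    (hg : IntegrableOn (fun t => (a - t) * g t) (Iio a)) :
    IntegrableOn (fun x => g x * (-(∫ t in x..a, ω t)) ^ 2) (Iio a) ∧
      ∫ x in Iio a, g x * (-(∫ t in x..a, ω t)) ^ 2 ≤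
        (∫ t in Iio a, ω t ^ 2) * (∫ t in Iio a, (a - t) * g t) := by
  set C := ∫ t in Iio a, ω t ^ 2 with hC
  have hC0 : 0 ≤ C := setIntegral_nonneg measurableSet_Iio fun t _ => sq_nonneg _
  -- pointwise bound
  have hbd : ∀ x ∈ Iio a, g x * (-(∫ t in x..a, ω t)) ^ 2 ≤ C * ((a - x) * g x) := by
    intro x hx
    have hxa : x < a := hx
    have hrw : (∫ t in x..a, ω t) = ∫ t in Ioo x a, ω t := by
      rw [intervalIntegral.integral_of_le hxa.le, integral_Ioc_eq_integral_Ioo]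
    have hcs := cs_aux hxa.le hω_meas (hω.mono_set Ioo_subset_Iio_self)
    have hmono : (∫ t in Ioo x a, ω t ^ 2) ≤ C :=
      setIntegral_mono_set hω
        (Filter.Eventually.of_forall fun t => sq_nonneg _)
        (HasSubset.Subset.eventuallyLE Ioo_subset_Iio_self)
    have h1 : (-(∫ t in x..a, ω t)) ^ 2 ≤ (a - x) * C := by
      rw [neg_sq, hrw]
      exact hcs.trans (mul_le_mul_of_nonneg_left hmono (by linarith))
    calc g x * (-(∫ t in x..a, ω t)) ^ 2 ≤ g x * ((a - x) * C) :=
          mul_le_mul_of_nonneg_left h1 (hg_nonneg x)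
      _ = C * ((a - x) * g x) := by ring
  -- measurability
  have hψ : ContinuousOn (fun x => ∫ t in x..a, ω t) (Iio a) := psi_contOn a hω_meas hω
  have hmeas : AEStronglyMeasurable (fun x => g x * (-(∫ t in x..a, ω t)) ^ 2)
      (volume.restrict (Iio a)) := by
    have h1 : AEMeasurable (fun x => ∫ t in x..a, ω t) (volume.restrict (Iio a)) :=
      hψ.aemeasurable measurableSet_Iio
    exact (hg_meas.aemeasurable.mul ((h1.neg.pow aemeasurable_const))).aestronglyMeasurable
  have hGint : Integrable (fun x => C * ((a - x) * g x)) (volume.restrict (Iio a)) :=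
    hg.const_mul C
  have hae : ∀ᵐ x ∂volume.restrict (Iio a),
      g x * (-(∫ t in x..a, ω t)) ^ 2 ≤ C * ((a - x) * g x) :=
    (ae_restrict_iff' measurableSet_Iio).2 (Filter.Eventually.of_forall hbd)
  have hnonneg : 0 ≤ᵐ[volume.restrict (Iio a)]
      fun x => g x * (-(∫ t in x..a, ω t)) ^ 2 :=
    Filter.Eventually.of_forall fun x => mul_nonneg (hg_nonneg x) (sq_nonneg _)
  constructor
  · refine hGint.mono' hmeas ?_
    filter_upwards [hae] with x hx
    rw [Real.norm_of_nonneg (mul_nonneg (hg_nonneg x) (sq_nonneg _))]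
    exact hx
  · calc ∫ x in Iio a, g x * (-(∫ t in x..a, ω t)) ^ 2
        ≤ ∫ x in Iio a, C * ((a - x) * g x) :=
          integral_mono_of_nonneg hnonneg hGint hae
      _ = C * ∫ x in Iio a, (a - x) * g x := MeasureTheory.integral_const_mul C _
end

section
/- Let a ∈ ℝ, let g : ℝ → ℝ be measurable with g > 0 almost everywhere on (−∞,a), ∫_{(−∞,a)} g(t) dt < ∞ and ∫_{(−∞,a)} (a−t)·g(t) dt < ∞, and let ω : ℝ → ℝ be measurable with ∫_{(−∞,a)} ω(t)²/g(t) dt < ∞. Define ψ(x) := −∫_{(−∞,x]} ω(t) dt for x < a. Then ∫_{(−∞,a)} ψ(x)² dx ≤ (∫_{(−∞,a)} ω(t)²/g(t) dt) · (∫_{(−∞,a)} (a−t)·g(t) dt) < ∞. -/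
open MeasureTheory Set Real

private lemma cont_prim {f : ℝ → ℝ} (hf : Integrable f) :
    Continuous fun x => ∫ t in Iic x, f t := by
  have h0 : ∀ x : ℝ, ∫ t in Iic x, f t = (∫ t in Iic (0:ℝ), f t) + ∫ t in (0:ℝ)..x, f t := by
    intro x
    have := intervalIntegral.integral_Iic_sub_Iic (hf.integrableOn (s := Iic (0:ℝ)))
      (hf.integrableOn (s := Iic x))
    linarith
  rw [show (fun x => ∫ t in Iic x, f t)
      = fun x => (∫ t in Iic (0:ℝ), f t) + ∫ t in (0:ℝ)..x, f t from funext h0]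
  exact continuous_const.add (hf.continuous_primitive 0)

private lemma fubini_aux {a : ℝ} {g : ℝ → ℝ} (hg_meas : Measurable g)
    (hg_pos : ∀ᵐ t ∂(volume.restrict (Iio a)), 0 < g t)
    (hg_int2 : IntegrableOn (fun t => (a - t) * g t) (Iio a)) :
    IntegrableOn (fun x => ∫ t in Iic x, (Iio a).indicator g t) (Iio a) ∧
      ∫ x in Iio a, (∫ t in Iic x, (Iio a).indicator g t) = ∫ t in Iio a, (a - t) * g t := by
  set g' : ℝ → ℝ := (Iio a).indicator g with hg'
  have hg'_meas : Measurable g' := hg_meas.indicator measurableSet_Iio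
  set S : Set (ℝ × ℝ) := {p : ℝ × ℝ | p.2 ≤ p.1 ∧ p.1 < a} with hS
  have hS_meas : MeasurableSet S :=
    (measurableSet_le measurable_snd measurable_fst).inter
      (measurableSet_lt measurable_fst measurable_const)
  set F : ℝ × ℝ → ℝ := S.indicator (fun p => g' p.2) with hF
  have hF_meas : Measurable F := (hg'_meas.comp measurable_snd).indicator hS_meas
  have hsec : ∀ t : ℝ, (fun x => F (x, t)) = (Ico t a).indicator (fun _ => g' t) := by
    intro t; funext x
    simp only [hF, hS, Set.indicator_apply, Set.mem_setOf_eq, Set.mem_Ico]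
  have hsecp : ∀ t x : ℝ, F (x, t) = (Ico t a).indicator (fun _ => g' t) x :=
    fun t x => congrFun (hsec t) x
  have hnorm : ∀ t : ℝ, (∫ x, ‖F (x, t)‖) = (volume (Ico t a)).toReal * ‖g' t‖ := by
    intro t
    simp only [hsecp]
    simp_rw [norm_indicator_eq_indicator_norm]
    rw [integral_indicator_const _ measurableSet_Ico, smul_eq_mul, measureReal_def]
  have hg_pos' : ∀ᵐ t : ℝ, t ∈ Iio a → 0 < g t := (ae_restrict_iff' measurableSet_Iio).1 hg_pos
  have hmaj : Integrable (fun t => ∫ x, ‖F (x, t)‖) := by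
    have h2 : Integrable ((Iio a).indicator (fun t => (a - t) * g t)) :=
      (integrable_indicator_iff measurableSet_Iio).2 hg_int2
    refine h2.congr ?_
    filter_upwards [hg_pos'] with t ht
    rw [hnorm t]
    by_cases hta : t < a
    · rw [Set.indicator_of_mem (Set.mem_Iio.2 hta), Real.volume_Ico,
        ENNReal.toReal_ofReal (sub_nonneg.2 hta.le), hg',
        Set.indicator_of_mem (Set.mem_Iio.2 hta), Real.norm_eq_abs,
        abs_of_pos (ht (Set.mem_Iio.2 hta))]
    · have hz : g' t = 0 := Set.indicator_of_notMem (by simpa using hta) g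
      rw [Set.indicator_of_notMem (by simpa using hta)]
      simp [hz]
  have hF_int : Integrable F (volume.prod volume) := by
    rw [integrable_prod_iff' hF_meas.aestronglyMeasurable]
    refine ⟨Filter.Eventually.of_forall fun t => ?_, hmaj⟩
    rw [hsec t]
    refine (integrable_indicator_iff measurableSet_Ico).2 ?_
    exact integrableOn_const (by rw [Real.volume_Ico]; exact ENNReal.ofReal_ne_top)
  have hxsec : (fun x => ∫ t, F (x, t)) = (Iio a).indicator (fun x => ∫ t in Iic x, g' t) := by
    funext x
    by_cases hx : x < a
    · have hfx : (fun t => F (x, t)) = (Iic x).indicator g' := by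
        funext t
        simp only [hF, hS, Set.indicator_apply, Set.mem_setOf_eq, Set.mem_Iic]
        by_cases h : t ≤ x
        · simp [h, hx]
        · simp [h]
      rw [hfx, integral_indicator measurableSet_Iic,
        Set.indicator_of_mem (Set.mem_Iio.2 hx)]
    · have hfx : (fun t => F (x, t)) = fun _ => 0 := by
        funext t
        simp only [hF, hS, Set.indicator_apply, Set.mem_setOf_eq]
        simp [hx]
      rw [hfx, integral_zero, Set.indicator_of_notMem (by simpa using hx)]
  have hint : IntegrableOn (fun x => ∫ t in Iic x, g' t) (Iio a) := by
    have h := hF_int.integral_prod_left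
    rw [hxsec] at h
    exact (integrable_indicator_iff measurableSet_Iio).1 h
  refine ⟨hint, ?_⟩
  have hswap : (∫ x, ∫ t, F (x, t)) = ∫ t, ∫ x, F (x, t) :=
    integral_integral_swap (f := fun x t => F (x, t)) hF_int
  have hL : (∫ x, ∫ t, F (x, t)) = ∫ x in Iio a, ∫ t in Iic x, g' t := by
    rw [hxsec, integral_indicator measurableSet_Iio]
  have htsec : ∀ t : ℝ, (∫ x, F (x, t)) = (Iio a).indicator (fun t => (a - t) * g t) t := by
    intro t
    rw [hsec t, integral_indicator_const _ measurableSet_Ico, smul_eq_mul]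
    by_cases hta : t < a
    · rw [measureReal_def, Real.volume_Ico, ENNReal.toReal_ofReal (sub_nonneg.2 hta.le),
        Set.indicator_of_mem (Set.mem_Iio.2 hta), hg',
        Set.indicator_of_mem (Set.mem_Iio.2 hta)]
    · have hz : g' t = 0 := Set.indicator_of_notMem (by simpa using hta) g
      rw [Set.indicator_of_notMem (by simpa using hta)]
      simp [hz]
  calc ∫ x in Iio a, (∫ t in Iic x, g' t)
      = ∫ x, ∫ t, F (x, t) := hL.symm
    _ = ∫ t, ∫ x, F (x, t) := hswap
    _ = ∫ t, (Iio a).indicator (fun t => (a - t) * g t) t := by simp_rw [htsec]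
    _ = ∫ t in Iio a, (a - t) * g t := integral_indicator measurableSet_Iio

/-- `L²` bound for the canonical primitive `ψ x = -∫_{(-∞,x]} ω`
of a `(1,1)`-superform coefficient `ω` with finite `L²`-norm `∫ ω²/g` with
respect to a Kähler weight `g` on `(-∞, a)` satisfying `∫ g < ∞` and
`∫ (a - t) g t dt < ∞`. -/
theorem stmt_3 (a : ℝ) (g ω : ℝ → ℝ) (hg_meas : Measurable g)
    (hg_pos : ∀ᵐ t ∂(volume.restrict (Iio a)), 0 < g t)
    (hg_int : IntegrableOn g (Iio a))
    (hg_int2 : IntegrableOn (fun t => (a - t) * g t) (Iio a))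
    (hω_meas : Measurable ω)
    (hω : IntegrableOn (fun t => ω t ^ 2 / g t) (Iio a)) :
    IntegrableOn (fun x => (-(∫ t in Iic x, ω t)) ^ 2) (Iio a) ∧
      ∫ x in Iio a, (-(∫ t in Iic x, ω t)) ^ 2 ≤
        (∫ t in Iio a, ω t ^ 2 / g t) * (∫ t in Iio a, (a - t) * g t) := by
  have hsub : ∀ {x : ℝ}, x < a → Iic x ⊆ Iio a :=
    fun {x} hx t ht => lt_of_le_of_lt ht hx
  set u : ℝ → ℝ := fun t => ω t / Real.sqrt (g t) with hu
  set v : ℝ → ℝ := fun t => Real.sqrt (g t) with hv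
  have hv_meas : Measurable v := Real.continuous_sqrt.measurable.comp hg_meas
  have hu_meas : Measurable u := hω_meas.div hv_meas
  have hueq : ∀ᵐ t ∂(volume.restrict (Iio a)), ω t ^ 2 / g t = u t ^ 2 := by
    filter_upwards [hg_pos] with t ht
    simp only [hu, div_pow, Real.sq_sqrt ht.le]
  have hveq : ∀ᵐ t ∂(volume.restrict (Iio a)), g t = v t ^ 2 := by
    filter_upwards [hg_pos] with t ht
    simp only [hv, Real.sq_sqrt ht.le]
  have hu2_int : IntegrableOn (fun t => u t ^ 2) (Iio a) := hω.congr hueq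
  have hv2_int : IntegrableOn (fun t => v t ^ 2) (Iio a) := hg_int.congr hveq
  have huv : ∀ᵐ t ∂(volume.restrict (Iio a)), ω t = u t * v t := by
    filter_upwards [hg_pos] with t ht
    simp only [hu, hv]
    rw [div_mul_cancel₀ _ (Real.sqrt_pos.2 ht).ne']
  have hω_int : IntegrableOn ω (Iio a) := by
    refine Integrable.mono' ((hu2_int.add hv2_int).div_const 2)
      hω_meas.aestronglyMeasurable ?_
    filter_upwards [huv] with t ht
    rw [Real.norm_eq_abs, ht, abs_mul]
    simp only [Pi.add_apply]
    nlinarith [sq_nonneg (|u t| - |v t|), sq_abs (u t), sq_abs (v t),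
      abs_nonneg (u t), abs_nonneg (v t)]
  have hA_eq : (∫ t in Iio a, ω t ^ 2 / g t) = ∫ t in Iio a, u t ^ 2 :=
    integral_congr_ae hueq
  have hhalf : ∀ {c : ℝ}, 0 ≤ c → (c ^ (1/2 : ℝ)) ^ 2 = c := by
    intro c hc
    rw [← Real.rpow_natCast (c ^ (1/2 : ℝ)) 2, ← Real.rpow_mul hc]
    norm_num
  have hr : ∀ y : ℝ, y ^ (2:ℝ) = y ^ 2 := fun y => by
    rw [show (2:ℝ) = ((2:ℕ):ℝ) by norm_num, Real.rpow_natCast]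
  have key : ∀ x, x < a →
      (∫ t in Iic x, ω t) ^ 2 ≤
        (∫ t in Iio a, ω t ^ 2 / g t) * ∫ t in Iic x, (Iio a).indicator g t := by
    intro x hx
    have hsx : Iic x ⊆ Iio a := hsub hx
    have hgpos_x : ∀ᵐ t ∂(volume.restrict (Iic x)), 0 < g t :=
      ae_restrict_of_ae_restrict_of_subset hsx hg_pos
    have huv_x : ∀ᵐ t ∂(volume.restrict (Iic x)), ω t = u t * v t :=
      ae_restrict_of_ae_restrict_of_subset hsx huv
    have hu2x : IntegrableOn (fun t => u t ^ 2) (Iic x) := hu2_int.mono_set hsx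
    have hv2x : IntegrableOn (fun t => v t ^ 2) (Iic x) := hv2_int.mono_set hsx
    have hmu : MemLp (fun t => |u t|) (ENNReal.ofReal 2) (volume.restrict (Iic x)) := by
      rw [show ENNReal.ofReal (2:ℝ) = 2 by simp]
      rw [memLp_two_iff_integrable_sq hu_meas.abs.aestronglyMeasurable]
      exact hu2x.congr (Filter.Eventually.of_forall fun t => (sq_abs (u t)).symm)
    have hmv : MemLp (fun t => |v t|) (ENNReal.ofReal 2) (volume.restrict (Iic x)) := by
      rw [show ENNReal.ofReal (2:ℝ) = 2 by simp]
      rw [memLp_two_iff_integrable_sq hv_meas.abs.aestronglyMeasurable]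
      exact hv2x.congr (Filter.Eventually.of_forall fun t => (sq_abs (v t)).symm)
    have hCS := integral_mul_le_Lp_mul_Lq_of_nonneg (μ := volume.restrict (Iic x))
      Real.HolderConjugate.two_two
      (Filter.Eventually.of_forall fun t => abs_nonneg (u t))
      (Filter.Eventually.of_forall fun t => abs_nonneg (v t)) hmu hmv
    simp only [hr, sq_abs] at hCS
    have hB : (∫ t in Iic x, u t ^ 2) ≤ ∫ t in Iio a, u t ^ 2 :=
      setIntegral_mono_set hu2_int
        (Filter.Eventually.of_forall fun t => sq_nonneg _) hsx.eventuallyLE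
    have hGx : (∫ t in Iic x, v t ^ 2) = ∫ t in Iic x, (Iio a).indicator g t := by
      refine setIntegral_congr_ae measurableSet_Iic ?_
      filter_upwards [(ae_restrict_iff' measurableSet_Iio).1 hg_pos] with t ht htx
      rw [show v t ^ 2 = g t from Real.sq_sqrt (ht (hsx htx)).le,
        Set.indicator_of_mem (hsx htx)]
    have hBx0 : 0 ≤ ∫ t in Iic x, u t ^ 2 :=
      setIntegral_nonneg measurableSet_Iic fun t _ => sq_nonneg _
    have hGx0 : 0 ≤ ∫ t in Iic x, v t ^ 2 :=
      setIntegral_nonneg measurableSet_Iic fun t _ => sq_nonneg _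
    have h1 : |∫ t in Iic x, ω t| ≤ ∫ t in Iic x, |u t| * |v t| := by
      calc |∫ t in Iic x, ω t| ≤ ∫ t in Iic x, |ω t| := by
            simpa [Real.norm_eq_abs] using
              norm_integral_le_integral_norm (μ := volume.restrict (Iic x)) ω
        _ = ∫ t in Iic x, |u t| * |v t| := by
            refine integral_congr_ae ?_
            filter_upwards [huv_x] with t ht
            rw [ht, abs_mul]
    have h2 : 0 ≤ ∫ t in Iic x, |u t| * |v t| :=
      setIntegral_nonneg measurableSet_Iic fun t _ =>
        mul_nonneg (abs_nonneg _) (abs_nonneg _)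
    calc (∫ t in Iic x, ω t) ^ 2 = |∫ t in Iic x, ω t| ^ 2 := (sq_abs _).symm
      _ ≤ (∫ t in Iic x, |u t| * |v t|) ^ 2 := by
          exact pow_le_pow_left₀ (abs_nonneg _) h1 2
      _ ≤ ((∫ t in Iic x, u t ^ 2) ^ (1/2:ℝ) * (∫ t in Iic x, v t ^ 2) ^ (1/2:ℝ)) ^ 2 :=
          pow_le_pow_left₀ h2 hCS 2
      _ = (∫ t in Iic x, u t ^ 2) * (∫ t in Iic x, v t ^ 2) := by
          rw [mul_pow, hhalf hBx0, hhalf hGx0]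
      _ ≤ (∫ t in Iio a, ω t ^ 2 / g t) * (∫ t in Iic x, v t ^ 2) :=
          mul_le_mul_of_nonneg_right (hB.trans_eq hA_eq.symm) hGx0
      _ = (∫ t in Iio a, ω t ^ 2 / g t) * ∫ t in Iic x, (Iio a).indicator g t := by
          rw [hGx]
  obtain ⟨hGint, hGval⟩ := fubini_aux hg_meas hg_pos hg_int2
  have hΨeq : ∀ x, x < a →
      (∫ t in Iic x, ω t) = ∫ t in Iic x, (Iio a).indicator ω t := fun x hx =>
    setIntegral_congr_fun measurableSet_Iic fun t ht =>
      (Set.indicator_of_mem (hsub hx ht) ω).symm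
  have hc : Continuous fun x => (∫ t in Iic x, (Iio a).indicator ω t) ^ 2 :=
    (cont_prim ((integrable_indicator_iff measurableSet_Iio).2 hω_int)).pow 2
  have hmeasψ : AEStronglyMeasurable (fun x => (-(∫ t in Iic x, ω t)) ^ 2)
      (volume.restrict (Iio a)) := by
    refine hc.aestronglyMeasurable.congr ?_
    refine (ae_restrict_iff' measurableSet_Iio).2 (Filter.Eventually.of_forall fun x hx => ?_)
    simp only [neg_sq]
    rw [hΨeq x hx]
  have hdom : IntegrableOn
      (fun x => (∫ t in Iio a, ω t ^ 2 / g t) * ∫ t in Iic x, (Iio a).indicator g t)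
      (Iio a) := hGint.const_mul _
  have part1 : IntegrableOn (fun x => (-(∫ t in Iic x, ω t)) ^ 2) (Iio a) := by
    refine Integrable.mono' hdom hmeasψ ?_
    refine (ae_restrict_iff' measurableSet_Iio).2 (Filter.Eventually.of_forall fun x hx => ?_)
    rw [Real.norm_eq_abs, neg_sq, abs_of_nonneg (sq_nonneg _)]
    exact key x hx
  refine ⟨part1, ?_⟩
  calc ∫ x in Iio a, (-(∫ t in Iic x, ω t)) ^ 2
      ≤ ∫ x in Iio a,
          (∫ t in Iio a, ω t ^ 2 / g t) * ∫ t in Iic x, (Iio a).indicator g t :=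
        setIntegral_mono_on part1 hdom measurableSet_Iio fun x hx => by
          rw [neg_sq]; exact key x hx
    _ = (∫ t in Iio a, ω t ^ 2 / g t) *
          ∫ x in Iio a, ∫ t in Iic x, (Iio a).indicator g t := integral_const_mul _ _
    _ = (∫ t in Iio a, ω t ^ 2 / g t) * ∫ t in Iio a, (a - t) * g t := by rw [hGval]
end

section
/- Let g : ℝ → ℝ be measurable with g > 0 almost everywhere on (−∞,0), ∫_{(−∞,0)} g(t) dt < ∞ and ∫_{(−∞,0)} t²·g(t) dt < ∞. Let ω : ℝ → ℝ be measurable with N² := ∫_{(−∞,0)} ω(t)²/g(t) dt < ∞, and let τ : ℝ → ℝ be measurable with M² := ∫_{(−∞,0)} τ(t)² dt < ∞. Define φ(x) := −∫_{(−∞,x]} ω(t) dt and ψ(x) := −∫_x^0 τ(t) dt for x < 0. Then for every x < 0, |φ(x)·ψ(x)| ≤ N·M·|x|^{−1/2}·(∫_{(−∞,x)} t²·g(t) dt)^{1/2}, and consequently φ(x)·ψ(x) → 0 as x → −∞. -/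
open MeasureTheory Set Real Filter

lemma cs_int {μ : Measure ℝ} {f h : ℝ → ℝ}
    (hf : AEStronglyMeasurable f μ) (hh : AEStronglyMeasurable h μ)
    (hf0 : 0 ≤ᵐ[μ] f) (hh0 : 0 ≤ᵐ[μ] h)
    (hf2 : Integrable (fun t => f t ^ 2) μ) (hh2 : Integrable (fun t => h t ^ 2) μ) :
    ∫ t, f t * h t ∂μ ≤ Real.sqrt (∫ t, f t ^ 2 ∂μ) * Real.sqrt (∫ t, h t ^ 2 ∂μ) := by
  have hpq : (2:ℝ).HolderConjugate 2 := Real.HolderConjugate.two_two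
  have h2 : ENNReal.ofReal (2:ℝ) = 2 := by rw [ENNReal.ofReal_ofNat]
  have hfL : MemLp f (ENNReal.ofReal (2:ℝ)) μ := by
    rw [h2]; exact (memLp_two_iff_integrable_sq hf).mpr hf2
  have hhL : MemLp h (ENNReal.ofReal (2:ℝ)) μ := by
    rw [h2]; exact (memLp_two_iff_integrable_sq hh).mpr hh2
  have key := integral_mul_le_Lp_mul_Lq_of_nonneg hpq hf0 hh0 hfL hhL
  have e : ∀ y : ℝ, y ^ (2:ℝ) = y ^ 2 := fun y => by
    rw [show (2:ℝ) = ((2:ℕ):ℝ) by norm_num, Real.rpow_natCast]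
  simp only [e] at key
  calc ∫ t, f t * h t ∂μ ≤ _ := key
    _ = Real.sqrt (∫ t, f t ^ 2 ∂μ) * Real.sqrt (∫ t, h t ^ 2 ∂μ) := by
        rw [Real.sqrt_eq_rpow, Real.sqrt_eq_rpow]

lemma stmt_10_key (g ω τ : ℝ → ℝ) (hg_meas : Measurable g)
    (hg_pos : ∀ᵐ t ∂(volume.restrict (Iio (0:ℝ))), 0 < g t)
    (hg_int : IntegrableOn g (Iio (0:ℝ)))
    (hg_int2 : IntegrableOn (fun t => t ^ 2 * g t) (Iio (0:ℝ)))
    (hω_meas : Measurable ω)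
    (hω : IntegrableOn (fun t => ω t ^ 2 / g t) (Iio (0:ℝ)))
    (hτ_meas : Measurable τ)
    (hτ : IntegrableOn (fun t => τ t ^ 2) (Iio (0:ℝ)))
    (x : ℝ) (hx : x < 0) :
    |(-(∫ t in Iic x, ω t)) * (-(∫ t in x..(0:ℝ), τ t))| ≤
        Real.sqrt (∫ t in Iio (0:ℝ), ω t ^ 2 / g t) *
          Real.sqrt (∫ t in Iio (0:ℝ), τ t ^ 2) *
          (Real.sqrt |x|)⁻¹ * Real.sqrt (∫ t in Iio x, t ^ 2 * g t) := by
  set A := ∫ t in Iio (0:ℝ), ω t ^ 2 / g t with hA_def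
  set B := ∫ t in Iio (0:ℝ), τ t ^ 2 with hB_def
  set Cx := ∫ t in Iio x, t ^ 2 * g t with hCx_def
  have hsub : Iic x ⊆ Iio (0:ℝ) := fun t ht => lt_of_le_of_lt ht hx
  have hgx : ∀ᵐ t ∂(volume.restrict (Iic x)), 0 < g t :=
    ae_restrict_of_ae_restrict_of_subset hsub hg_pos
  have hωg_nonneg : 0 ≤ᵐ[volume.restrict (Iio (0:ℝ))] fun t => ω t ^ 2 / g t := by
    filter_upwards [hg_pos] with t hgt
    exact div_nonneg (sq_nonneg _) hgt.le
  -- Cauchy–Schwarz for φ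
  have hsqrt_meas : Measurable fun t => Real.sqrt (g t) :=
    Real.continuous_sqrt.measurable.comp hg_meas
  set f : ℝ → ℝ := fun t => |ω t| / Real.sqrt (g t) with hf_def
  set h : ℝ → ℝ := fun t => Real.sqrt (g t) with hh_def
  have hfh : (fun t => f t * h t) =ᵐ[volume.restrict (Iic x)] fun t => |ω t| := by
    filter_upwards [hgx] with t hgt
    have hs : Real.sqrt (g t) ≠ 0 := ne_of_gt (Real.sqrt_pos.mpr hgt)
    simp only [hf_def, hh_def]
    field_simp
  have hf2 : (fun t => f t ^ 2) =ᵐ[volume.restrict (Iic x)] fun t => ω t ^ 2 / g t := by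
    filter_upwards [hgx] with t hgt
    simp only [hf_def, div_pow, sq_abs, Real.sq_sqrt hgt.le]
  have hh2 : (fun t => h t ^ 2) =ᵐ[volume.restrict (Iic x)] g := by
    filter_upwards [hgx] with t hgt
    simp only [hh_def, Real.sq_sqrt hgt.le]
  have hcs := cs_int (μ := volume.restrict (Iic x)) (f := f)
    ((hω_meas.abs.div hsqrt_meas).aestronglyMeasurable)
    (hsqrt_meas.aestronglyMeasurable)
    (Filter.Eventually.of_forall fun t => div_nonneg (abs_nonneg _) (Real.sqrt_nonneg _))
    (Filter.Eventually.of_forall fun t => Real.sqrt_nonneg _)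
    ((hω.mono_set hsub).congr hf2.symm)
    ((hg_int.mono_set hsub).congr hh2.symm)
  rw [integral_congr_ae hfh, integral_congr_ae hf2, integral_congr_ae hh2] at hcs
  have hφ : |∫ t in Iic x, ω t| ≤
      Real.sqrt (∫ t in Iic x, ω t ^ 2 / g t) * Real.sqrt (∫ t in Iic x, g t) := by
    calc |∫ t in Iic x, ω t| ≤ ∫ t in Iic x, |ω t| := by
          simpa [Real.norm_eq_abs] using
            norm_integral_le_integral_norm (μ := volume.restrict (Iic x)) ω
      _ ≤ _ := hcs
  -- bound the g-integral
  have hIg : (∫ t in Iic x, g t) ≤ (x ^ 2)⁻¹ * Cx := by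
    have hx2 : (0:ℝ) < x ^ 2 := by nlinarith
    have hmono : (∫ t in Iic x, g t) ≤ ∫ t in Iic x, (x ^ 2)⁻¹ * (t ^ 2 * g t) := by
      refine integral_mono_ae (hg_int.mono_set hsub)
        (((hg_int2.mono_set hsub)).const_mul _) ?_
      filter_upwards [hgx, ae_restrict_mem measurableSet_Iic] with t hgt ht
      have ht' : t ≤ x := ht
      rw [inv_mul_eq_div, le_div_iff₀ hx2]
      have h1 : x ^ 2 ≤ t ^ 2 := by
        nlinarith [mul_nonneg (sub_nonneg.mpr ht') (by linarith : (0:ℝ) ≤ -(x + t))]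
      nlinarith [mul_nonneg (sub_nonneg.mpr h1) hgt.le]
    calc (∫ t in Iic x, g t) ≤ ∫ t in Iic x, (x ^ 2)⁻¹ * (t ^ 2 * g t) := hmono
      _ = (x ^ 2)⁻¹ * ∫ t in Iic x, t ^ 2 * g t := MeasureTheory.integral_const_mul _ _
      _ = (x ^ 2)⁻¹ * Cx := by
          rw [hCx_def, setIntegral_congr_set (Iio_ae_eq_Iic (a := x))]
  have hsqIg : Real.sqrt (∫ t in Iic x, g t) ≤ |x|⁻¹ * Real.sqrt Cx := by
    calc Real.sqrt (∫ t in Iic x, g t) ≤ Real.sqrt ((x ^ 2)⁻¹ * Cx) := Real.sqrt_le_sqrt hIg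
      _ = |x|⁻¹ * Real.sqrt Cx := by
          rw [Real.sqrt_mul (by positivity), Real.sqrt_inv, Real.sqrt_sq_eq_abs]
  have hAx : Real.sqrt (∫ t in Iic x, ω t ^ 2 / g t) ≤ Real.sqrt A :=
    Real.sqrt_le_sqrt (setIntegral_mono_set hω hωg_nonneg hsub.eventuallyLE)
  -- Cauchy–Schwarz for ψ
  have hIocsub : (Ioc x 0 : Set ℝ) ≤ᵐ[volume] Iio (0:ℝ) := by
    rw [ae_le_set]
    refine measure_mono_null (fun t ht => ?_) (measure_singleton (0:ℝ))
    rcases ht with ⟨⟨_, ht0⟩, hnot⟩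
    simp only [mem_Iio, not_lt] at hnot
    simp [le_antisymm ht0 hnot]
  have hτ_Ioc : IntegrableOn (fun t => τ t ^ 2) (Ioc x 0) := by
    have h0 : IntegrableOn (fun t => τ t ^ 2) (Ioo x 0) := hτ.mono_set Ioo_subset_Iio_self
    exact h0.congr_set_ae (Ioo_ae_eq_Ioc (a := x) (b := (0:ℝ))).symm
  have hcsτ := cs_int (μ := volume.restrict (Ioc x 0))
    (hτ_meas.abs.aestronglyMeasurable)
    (aestronglyMeasurable_const (b := (1:ℝ)))
    (Filter.Eventually.of_forall fun t => abs_nonneg _)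
    (Filter.Eventually.of_forall fun t => zero_le_one)
    (by simp only [sq_abs]; exact hτ_Ioc)
    (by
      simp only [one_pow]
      exact integrableOn_const measure_Ioc_lt_top.ne)
  have hone : (∫ t in Ioc x 0, (1:ℝ) ^ 2) = -x := by
    simp only [one_pow, setIntegral_const, smul_eq_mul, mul_one, Real.volume_Ioc]
    rw [Real.volume_real_Ioc_of_le hx.le]
    ring
  have hψ : |∫ t in x..(0:ℝ), τ t| ≤ Real.sqrt B * Real.sqrt |x| := by
    have h1 : |∫ t in x..(0:ℝ), τ t| ≤ ∫ t in Ioc x 0, |τ t| := by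
      rw [intervalIntegral.integral_of_le hx.le]
      simpa [Real.norm_eq_abs] using
        norm_integral_le_integral_norm (μ := volume.restrict (Ioc x 0)) τ
    have h2 : (∫ t in Ioc x 0, |τ t|) ≤
        Real.sqrt (∫ t in Ioc x 0, |τ t| ^ 2) * Real.sqrt (∫ t in Ioc x 0, (1:ℝ) ^ 2) := by
      simpa using hcsτ
    have h3 : (∫ t in Ioc x 0, |τ t| ^ 2) ≤ B := by
      simp only [sq_abs]
      exact setIntegral_mono_set hτ
        (Filter.Eventually.of_forall fun t => sq_nonneg _) hIocsub
    rw [hone] at h2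
    refine h1.trans (h2.trans ?_)
    rw [abs_of_neg hx]
    exact mul_le_mul_of_nonneg_right (Real.sqrt_le_sqrt h3) (Real.sqrt_nonneg _)
  -- combine
  have hxabs : (0:ℝ) < |x| := abs_pos.mpr hx.ne
  have hs : (0:ℝ) < Real.sqrt |x| := Real.sqrt_pos.mpr hxabs
  calc |(-(∫ t in Iic x, ω t)) * (-(∫ t in x..(0:ℝ), τ t))|
      = |∫ t in Iic x, ω t| * |∫ t in x..(0:ℝ), τ t| := by
        rw [abs_mul, abs_neg, abs_neg]
    _ ≤ (Real.sqrt (∫ t in Iic x, ω t ^ 2 / g t) * Real.sqrt (∫ t in Iic x, g t)) *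
        (Real.sqrt B * Real.sqrt |x|) := by
        exact mul_le_mul hφ hψ (abs_nonneg _) (by positivity)
    _ ≤ (Real.sqrt A * (|x|⁻¹ * Real.sqrt Cx)) * (Real.sqrt B * Real.sqrt |x|) := by
        gcongr
    _ = Real.sqrt A * Real.sqrt B * (Real.sqrt |x|)⁻¹ * Real.sqrt Cx := by
        have hinv : |x|⁻¹ * Real.sqrt |x| = (Real.sqrt |x|)⁻¹ := by
          field_simp
          exact Real.sq_sqrt hxabs.le
        calc (Real.sqrt A * (|x|⁻¹ * Real.sqrt Cx)) * (Real.sqrt B * Real.sqrt |x|)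
            = Real.sqrt A * Real.sqrt Cx * Real.sqrt B * (|x|⁻¹ * Real.sqrt |x|) := by ring
          _ = Real.sqrt A * Real.sqrt Cx * Real.sqrt B * (Real.sqrt |x|)⁻¹ := by rw [hinv]
          _ = Real.sqrt A * Real.sqrt B * (Real.sqrt |x|)⁻¹ * Real.sqrt Cx := by ring

/-- boundary decay at the infinite end of an edge `[-∞,0]`:
for the canonical primitives `φ x = -∫_{(-∞,x]} ω` and `ψ x = -∫_x^0 τ`, with
`N = √(∫ ω²/g)` and `M = √(∫ τ²)`, one has
`|φ x ψ x| ≤ N M |x|^{-1/2} (∫_{(-∞,x)} t² g)^{1/2}` for all `x < 0`, and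
consequently `φ x ψ x → 0` as `x → -∞`. -/
theorem stmt_10 (g ω τ : ℝ → ℝ) (hg_meas : Measurable g)
    (hg_pos : ∀ᵐ t ∂(volume.restrict (Iio (0:ℝ))), 0 < g t)
    (hg_int : IntegrableOn g (Iio (0:ℝ)))
    (hg_int2 : IntegrableOn (fun t => t ^ 2 * g t) (Iio (0:ℝ)))
    (hω_meas : Measurable ω)
    (hω : IntegrableOn (fun t => ω t ^ 2 / g t) (Iio (0:ℝ)))
    (hτ_meas : Measurable τ)
    (hτ : IntegrableOn (fun t => τ t ^ 2) (Iio (0:ℝ))) :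
    (∀ x < (0:ℝ),
      |(-(∫ t in Iic x, ω t)) * (-(∫ t in x..(0:ℝ), τ t))| ≤
        Real.sqrt (∫ t in Iio (0:ℝ), ω t ^ 2 / g t) *
          Real.sqrt (∫ t in Iio (0:ℝ), τ t ^ 2) *
          (Real.sqrt |x|)⁻¹ * Real.sqrt (∫ t in Iio x, t ^ 2 * g t)) ∧
    Tendsto (fun x => (-(∫ t in Iic x, ω t)) * (-(∫ t in x..(0:ℝ), τ t)))
      atBot (nhds 0) := by
  have key := stmt_10_key g ω τ hg_meas hg_pos hg_int hg_int2 hω_meas hω hτ_meas hτ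
  refine ⟨key, ?_⟩
  set A := ∫ t in Iio (0:ℝ), ω t ^ 2 / g t
  set B := ∫ t in Iio (0:ℝ), τ t ^ 2
  set C := ∫ t in Iio (0:ℝ), t ^ 2 * g t
  have ht2g_nonneg : 0 ≤ᵐ[volume.restrict (Iio (0:ℝ))] fun t => t ^ 2 * g t := by
    filter_upwards [hg_pos] with t hgt
    exact mul_nonneg (sq_nonneg _) hgt.le
  set K := Real.sqrt A * Real.sqrt B * Real.sqrt C with hK_def
  have hbound : ∀ᶠ x in atBot,
      ‖(-(∫ t in Iic x, ω t)) * (-(∫ t in x..(0:ℝ), τ t))‖ ≤ K * (Real.sqrt |x|)⁻¹ := by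
    filter_upwards [eventually_lt_atBot (0:ℝ)] with x hx
    have hCx : Real.sqrt (∫ t in Iio x, t ^ 2 * g t) ≤ Real.sqrt C :=
      Real.sqrt_le_sqrt (setIntegral_mono_set hg_int2 ht2g_nonneg
        ((Iio_subset_Iio hx.le).eventuallyLE))
    calc ‖(-(∫ t in Iic x, ω t)) * (-(∫ t in x..(0:ℝ), τ t))‖
        ≤ Real.sqrt A * Real.sqrt B * (Real.sqrt |x|)⁻¹ *
          Real.sqrt (∫ t in Iio x, t ^ 2 * g t) := by
          rw [Real.norm_eq_abs]; exact key x hx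
      _ ≤ Real.sqrt A * Real.sqrt B * (Real.sqrt |x|)⁻¹ * Real.sqrt C :=
          mul_le_mul_of_nonneg_left hCx (by positivity)
      _ = K * (Real.sqrt |x|)⁻¹ := by rw [hK_def]; ring
  have hG : Tendsto (fun x : ℝ => K * (Real.sqrt |x|)⁻¹) atBot (nhds 0) := by
    have h1 : Tendsto (fun x : ℝ => Real.sqrt |x|) atBot atTop := by
      have h2 : Tendsto (fun x : ℝ => |x|) atBot atTop := tendsto_abs_atBot_atTop
      have h3 : Tendsto Real.sqrt atTop atTop := by
        refine (tendsto_rpow_atTop (y := 1/2) (by norm_num)).congr' ?_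
        filter_upwards [eventually_ge_atTop (0:ℝ)] with y _
        exact (Real.sqrt_eq_rpow y).symm
      exact h3.comp h2
    have h4 : Tendsto (fun x : ℝ => (Real.sqrt |x|)⁻¹) atBot (nhds 0) :=
      Tendsto.inv_tendsto_atTop h1
    simpa using tendsto_const_nhds.mul h4
  exact squeeze_zero_norm' hbound hG
end

section
/- Let g : ℝ → ℝ be measurable with g > 0 almost everywhere on (−∞,0), ∫_{(−∞,0)} g(t) dt < ∞ and ∫_{(−∞,0)} t²·g(t) dt < ∞. Let ω : ℝ → ℝ be measurable with ∫_{(−∞,0)} ω(t)²/g(t) dt < ∞, and let τ : ℝ → ℝ be measurable with ∫_{(−∞,0)} τ(t)² dt < ∞. Define φ(x) := −∫_{(−∞,x]} ω(t) dt and ψ(x) := −∫_x^0 τ(t) dt for x < 0. Then the functions ψ·ω and τ·φ are integrable on (−∞,0) and ∫_{(−∞,0)} ψ(t)·ω(t) dt = ∫_{(−∞,0)} τ(t)·φ(t) dt. -/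
open MeasureTheory Set Real

/-- integration by parts without boundary terms on the infinite
edge `[-∞,0]`: with `φ x = -∫_{(-∞,x]} ω` and `ψ x = -∫_x^0 τ`, the functions
`ψ·ω` and `τ·φ` are integrable on `(-∞,0)` and `∫ ψ ω = ∫ τ φ`. -/
theorem stmt_11 (g ω τ : ℝ → ℝ) (hg_meas : Measurable g)
    (hg_pos : ∀ᵐ t ∂(volume.restrict (Iio (0:ℝ))), 0 < g t)
    (hg_int : IntegrableOn g (Iio (0:ℝ)))
    (hg_int2 : IntegrableOn (fun t => t ^ 2 * g t) (Iio (0:ℝ)))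
    (hω_meas : Measurable ω)
    (hω : IntegrableOn (fun t => ω t ^ 2 / g t) (Iio (0:ℝ)))
    (hτ_meas : Measurable τ)
    (hτ : IntegrableOn (fun t => τ t ^ 2) (Iio (0:ℝ))) :
    IntegrableOn (fun t => (-(∫ s in t..(0:ℝ), τ s)) * ω t) (Iio (0:ℝ)) ∧
    IntegrableOn (fun t => τ t * (-(∫ s in Iic t, ω s))) (Iio (0:ℝ)) ∧
    ∫ t in Iio (0:ℝ), (-(∫ s in t..(0:ℝ), τ s)) * ω t =
      ∫ t in Iio (0:ℝ), τ t * (-(∫ s in Iic t, ω s)) := by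
  set μ := volume.restrict (Iio (0:ℝ)) with hμ
  set F : ℝ × ℝ → ℝ := fun p => if p.1 < p.2 then τ p.2 * ω p.1 else 0 with hF_def
  have hF_meas : Measurable F := by
    have h1 : F = {q : ℝ × ℝ | q.1 < q.2}.indicator (fun q => τ q.2 * ω q.1) := by
      funext p
      by_cases h : p.1 < p.2 <;> simp [hF_def, Set.indicator_apply, h]
    rw [h1]
    exact ((hτ_meas.comp measurable_snd).mul (hω_meas.comp measurable_fst)).indicator
      (measurableSet_lt measurable_fst measurable_snd)
  -- τ is integrable on every Ioo a 0
  have hτ_loc : ∀ a : ℝ, IntegrableOn τ (Ioo a 0) := by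
    intro a
    rcases le_or_gt 0 a with h | h
    · rw [Ioo_eq_empty (by linarith)]
      simp [integrableOn_empty]
    · have hmaj : IntegrableOn (fun s => (τ s ^ 2 + 1) / 2) (Ioo a 0) := by
        refine Integrable.div_const ?_ 2
        exact (hτ.mono_set Ioo_subset_Iio_self).add
          (integrableOn_const (by simp [Real.volume_Ioo]))
      refine Integrable.mono' hmaj hτ_meas.aestronglyMeasurable.restrict ?_
      filter_upwards with s
      rw [Real.norm_eq_abs]
      nlinarith [sq_nonneg (|τ s| - 1), sq_abs (τ s), abs_nonneg (τ s)]
  -- slice functions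
  have hslice_t : ∀ t : ℝ, (fun s => F (t, s)) = (Ioi t).indicator (fun s => τ s * ω t) := by
    intro t; funext s
    by_cases h : t < s <;> simp [hF_def, Set.indicator_apply, h, mem_Ioi]
  have hslice_s : ∀ s : ℝ, (fun t => F (t, s)) = (Iio s).indicator (fun t => τ s * ω t) := by
    intro s; funext t
    by_cases h : t < s <;> simp [hF_def, Set.indicator_apply, h, mem_Iio]
  have hrestrict : ∀ t : ℝ, μ.restrict (Ioi t) = volume.restrict (Ioo t 0) := by
    intro t
    rw [hμ, Measure.restrict_restrict measurableSet_Ioi, Ioi_inter_Iio]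
  -- the total integral of τ²
  set T : ℝ := ∫ s in Iio (0:ℝ), τ s ^ 2 with hT_def
  have hT_nonneg : 0 ≤ T := setIntegral_nonneg measurableSet_Iio (fun s _ => sq_nonneg _)
  -- integrability of F on the product
  have hF_int : Integrable F (μ.prod μ) := by
    rw [integrable_prod_iff hF_meas.aestronglyMeasurable]
    constructor
    · filter_upwards [ae_restrict_mem measurableSet_Iio] with t ht
      rw [hslice_t t, integrable_indicator_iff measurableSet_Ioi]
      have : IntegrableOn (fun s => τ s * ω t) (Ioi t) μ := by
        unfold IntegrableOn
        rw [hrestrict t]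
        exact (hτ_loc t).mul_const (ω t)
      exact this
    · -- bound the inner integral of norms
      have hval : ∀ᵐ t ∂μ, ∫ s, ‖F (t, s)‖ ∂μ = |ω t| * ∫ s in Ioo t 0, |τ s| := by
        filter_upwards with t
        have h1 : (fun s => ‖F (t, s)‖) = (Ioi t).indicator (fun s => |τ s * ω t|) := by
          funext s
          by_cases h : t < s <;> simp [hF_def, Set.indicator_apply, h, mem_Ioi, abs_mul]
        rw [h1, integral_indicator measurableSet_Ioi]
        rw [show ∫ s in Ioi t, |τ s * ω t| ∂μ = ∫ s in Ioo t 0, |τ s * ω t| by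
          rw [← hrestrict t]]
        simp_rw [abs_mul]
        rw [integral_mul_const, mul_comm]
      set M : ℝ → ℝ := fun t =>
        (T * ((ω t ^ 2 / g t + g t) / 2) + (ω t ^ 2 / g t + t ^ 2 * g t) / 2) / 2 with hM_def
      have hM_int : Integrable M μ := by
        refine Integrable.div_const ?_ 2
        exact (((hω.add hg_int).div_const 2).const_mul T).add ((hω.add hg_int2).div_const 2)
      refine Integrable.mono' hM_int ?_ ?_
      · exact (hF_meas.norm.stronglyMeasurable.integral_prod_right').aestronglyMeasurable
      · filter_upwards [hval, hg_pos, ae_restrict_mem measurableSet_Iio] with t hvt hgt ht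
        rw [hvt]
        have hI_nonneg : 0 ≤ ∫ s in Ioo t 0, |τ s| :=
          setIntegral_nonneg measurableSet_Ioo (fun s _ => abs_nonneg _)
        rw [Real.norm_eq_abs, abs_of_nonneg (mul_nonneg (abs_nonneg _) hI_nonneg)]
        -- bound the inner integral
        have hI_bound : ∫ s in Ioo t 0, |τ s| ≤ (T + (-t)) / 2 := by
          have h1 : ∫ s in Ioo t 0, |τ s| ≤ ∫ s in Ioo t 0, (τ s ^ 2 + 1) / 2 := by
            refine setIntegral_mono_on ?_ ?_ measurableSet_Ioo ?_
            · exact (hτ_loc t).abs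
            · refine Integrable.div_const ?_ 2
              exact (hτ.mono_set Ioo_subset_Iio_self).add
                (integrableOn_const (by simp [Real.volume_Ioo]))
            · intro s _
              nlinarith [sq_nonneg (|τ s| - 1), sq_abs (τ s), abs_nonneg (τ s)]
          have h2 : ∫ s in Ioo t 0, (τ s ^ 2 + 1) / 2
              = ((∫ s in Ioo t 0, τ s ^ 2) + ∫ s in Ioo t 0, (1:ℝ)) / 2 := by
            rw [← integral_add (hτ.mono_set Ioo_subset_Iio_self)
              (integrableOn_const (by simp [Real.volume_Ioo]))]
            simp [integral_div]
          have h3 : ∫ s in Ioo t 0, τ s ^ 2 ≤ T := by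
            refine setIntegral_mono_set hτ ?_ ?_
            · filter_upwards with s using sq_nonneg _
            · exact HasSubset.Subset.eventuallyLE Ioo_subset_Iio_self
          have h4 : ∫ s in Ioo t 0, (1:ℝ) = -t := by
            simp only [setIntegral_const, smul_eq_mul, mul_one]
            rw [measureReal_def, Real.volume_Ioo, ENNReal.toReal_ofReal (by linarith [mem_Iio.mp ht])]
            ring
          rw [h2, h4] at h1
          linarith
        -- AM-GM bounds
        have hg0 : (0:ℝ) < g t := hgt
        have he : ω t ^ 2 / g t * g t = ω t ^ 2 := div_mul_cancel₀ _ hg0.ne'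
        have hb1 : |ω t| ≤ (ω t ^ 2 / g t + g t) / 2 := by
          nlinarith [sq_nonneg (|ω t| - g t), sq_abs (ω t)]
        have hb2 : |ω t| * (-t) ≤ (ω t ^ 2 / g t + t ^ 2 * g t) / 2 := by
          nlinarith [sq_nonneg (|ω t| - (-t) * g t), sq_abs (ω t)]
        have ht0 : t < 0 := mem_Iio.mp ht
        have habs : 0 ≤ |ω t| := abs_nonneg _
        rw [hM_def]
        calc |ω t| * ∫ s in Ioo t 0, |τ s| ≤ |ω t| * ((T + (-t)) / 2) := by
              exact mul_le_mul_of_nonneg_left hI_bound habs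
          _ = (T * |ω t| + |ω t| * (-t)) / 2 := by ring
          _ ≤ (T * ((ω t ^ 2 / g t + g t) / 2) + (ω t ^ 2 / g t + t ^ 2 * g t) / 2) / 2 := by
              have := mul_le_mul_of_nonneg_left hb1 hT_nonneg
              linarith
  -- values of the inner integrals
  have hval1 : ∀ᵐ t ∂μ, (-(∫ s in t..(0:ℝ), τ s)) * ω t = -(∫ s, F (t, s) ∂μ) := by
    filter_upwards [ae_restrict_mem measurableSet_Iio] with t ht
    have ht0 : t < 0 := mem_Iio.mp ht
    have h1 : ∫ s, F (t, s) ∂μ = ∫ s in Ioo t 0, τ s * ω t := by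
      rw [hslice_t t, integral_indicator measurableSet_Ioi, ← hrestrict t]
    rw [h1, integral_mul_const, intervalIntegral.integral_of_le ht0.le,
      integral_Ioc_eq_integral_Ioo]
    ring
  have hval2 : ∀ᵐ s ∂μ, τ s * (-(∫ t in Iic s, ω t)) = -(∫ t, F (t, s) ∂μ) := by
    filter_upwards [ae_restrict_mem measurableSet_Iio] with s hs
    have hs0 : s < 0 := mem_Iio.mp hs
    have h1 : ∫ t, F (t, s) ∂μ = ∫ t in Iio s, τ s * ω t := by
      rw [hslice_s s, integral_indicator measurableSet_Iio]
      congr 1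
      rw [hμ, Measure.restrict_restrict measurableSet_Iio, Iio_inter_Iio,
        min_eq_left hs0.le]
    rw [h1, integral_const_mul, setIntegral_congr_set (Iio_ae_eq_Iic (a := s)).symm]
    ring
  refine ⟨?_, ?_, ?_⟩
  · refine Integrable.congr hF_int.integral_prod_left.neg ?_
    filter_upwards [hval1] with t h using h.symm
  · refine Integrable.congr hF_int.integral_prod_right.neg ?_
    filter_upwards [hval2] with s h using h.symm
  · rw [integral_congr_ae hval1, integral_congr_ae hval2, integral_neg, integral_neg]
    congr 1
    exact integral_integral_swap hF_int
end
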